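/- Let N be a prime, D < 0, k even, and let a : Q_{N,D} → ℂ satisfy a(T[U]) = a(T) for all U ∈ Γ₀(N) and a([Na, −b, c]) = a([Na, b, c]) for all [Na, b, c] ∈ Q_{N,D}. Then B(D) = |A(D)|, where B(D) := (1/2) Σ_{ρ ∈ R_D} |B(D, ρ)| and A(D) := (1/2) Σ_{T ∈ Q_{N,D}/Γ₀(N)} a(T)/ε(T). -/

import Mathlib

/-- `SL(2, ℤ)`. -/
abbrev SL2Z := Matrix.SpecialLinearGroup (Fin 2) ℤ

/-- An integral binary quadratic form `a x² + b x y + c y²`. -/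
structure BQF where
  a : ℤ
  b : ℤ
  c : ℤ

namespace BQF

/-- The value of the form at `(x, y)`. -/
def eval (T : BQF) (x y : ℤ) : ℤ := T.a * x ^ 2 + T.b * x * y + T.c * y ^ 2

/-- The discriminant `b² - 4ac`. -/
def disc (T : BQF) : ℤ := T.b ^ 2 - 4 * T.a * T.c

/-- Positive definiteness. -/
def PosDef (T : BQF) : Prop := ∀ x y : ℤ, ¬(x = 0 ∧ y = 0) → 0 < T.eval x y

/-- The action `T[U]` of `SL(2, ℤ)` on binary quadratic forms:
`T[U](x, y) = T(αx + βy, γx + δy)` for `U = (α β; γ δ)`. -/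
def act (T : BQF) (U : SL2Z) : BQF :=
  ⟨T.a * (U.1 0 0) ^ 2 + T.b * (U.1 0 0) * (U.1 1 0) + T.c * (U.1 1 0) ^ 2,
   2 * T.a * (U.1 0 0) * (U.1 0 1) + T.b * ((U.1 0 0) * (U.1 1 1) + (U.1 0 1) * (U.1 1 0))
     + 2 * T.c * (U.1 1 0) * (U.1 1 1),
   T.a * (U.1 0 1) ^ 2 + T.b * (U.1 0 1) * (U.1 1 1) + T.c * (U.1 1 1) ^ 2⟩

end BQF

instance : DecidableEq BQF :=
  fun T T' => decidable_of_iff (T.a = T'.a ∧ T.b = T'.b ∧ T.c = T'.c)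
    (by cases T; cases T'; simp [BQF.mk.injEq])


/-- `Γ₀(N)`: matrices in `SL(2, ℤ)` whose lower-left entry is divisible by `N`. -/
def Gamma0Set (N : ℕ) : Set SL2Z := {U | (N : ℤ) ∣ U.1 1 0}

/-- `Q_{N,D}`: positive definite forms `[Na, b, c]` of discriminant `D`. -/
def QND (N : ℕ) (D : ℤ) : Set BQF :=
  {T | T.PosDef ∧ (N : ℤ) ∣ T.a ∧ T.disc = D}

/-- `Q_{N,D,ρ}`: members of `Q_{N,D}` with `b ≡ ρ (mod 2N)`. -/
def QNDrho (N : ℕ) (D ρ : ℤ) : Set BQF :=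
  {T | T ∈ QND N D ∧ T.b ≡ ρ [ZMOD (2 * N)]}

/-- `ε(T) = #{U ∈ Γ₀(N) : T[U] = T}`. -/
noncomputable def eps (N : ℕ) (T : BQF) : ℕ :=
  Nat.card {U : SL2Z // U ∈ Gamma0Set N ∧ T.act U = T}

/-- `R` is a set of representatives for the `Γ₀(N)`-orbits on `S`: every member of `R`
lies in `S`, and every member of `S` is `Γ₀(N)`-equivalent to exactly one member of `R`. -/
def IsOrbitReps (N : ℕ) (S : Set BQF) (R : Finset BQF) : Prop :=
  (∀ T ∈ R, T ∈ S) ∧ ∀ T ∈ S, ∃! T', T' ∈ R ∧ ∃ U ∈ Gamma0Set N, T.act U = T'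

/-- A fundamental discriminant: either squarefree and `≡ 1 (mod 4)`, or `4m` with `m`
squarefree and `m ≡ 2, 3 (mod 4)`. -/
def IsFundamentalDiscriminant (D : ℤ) : Prop :=
  (Squarefree D ∧ D % 4 = 1) ∨
    (∃ m : ℤ, D = 4 * m ∧ Squarefree m ∧ (m % 4 = 2 ∨ m % 4 = 3))

-- test basics
theorem act_one (T : BQF) : T.act 1 = T := by
  simp [BQF.act]

theorem act_mul (T : BQF) (U V : SL2Z) : T.act (U * V) = (T.act U).act V := by
  show BQF.mk _ _ _ = BQF.mk _ _ _
  simp only [BQF.act, Matrix.SpecialLinearGroup.coe_mul, Matrix.mul_apply, Fin.sum_univ_two]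
  rw [BQF.mk.injEq]; refine ⟨?_, ?_, ?_⟩ <;> ring

theorem det_eq (U : SL2Z) : U.1 0 0 * U.1 1 1 - U.1 0 1 * U.1 1 0 = 1 := by
  have := U.2
  rwa [Matrix.det_fin_two] at this

theorem inv_entries (U : SL2Z) : (U⁻¹).1 1 0 = -U.1 1 0 := by
  rw [Matrix.SpecialLinearGroup.SL2_inv_expl U]; rfl

theorem g0_one (N : ℕ) : (1 : SL2Z) ∈ Gamma0Set N := by
  simp [Gamma0Set]

theorem g0_mul {N : ℕ} {U V : SL2Z} (hU : U ∈ Gamma0Set N) (hV : V ∈ Gamma0Set N) :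
    U * V ∈ Gamma0Set N := by
  simp only [Gamma0Set, Set.mem_setOf_eq, Matrix.SpecialLinearGroup.coe_mul,
    Matrix.mul_apply, Fin.sum_univ_two] at *
  exact dvd_add (Dvd.dvd.mul_right hU _) (Dvd.dvd.mul_left hV _)

theorem g0_inv {N : ℕ} {U : SL2Z} (hU : U ∈ Gamma0Set N) : U⁻¹ ∈ Gamma0Set N := by
  simp only [Gamma0Set, Set.mem_setOf_eq, inv_entries] at *
  exact hU.neg_right

/-- Γ₀-equivalence. -/
def GRel (N : ℕ) (T T' : BQF) : Prop := ∃ U ∈ Gamma0Set N, T.act U = T'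

theorem rel_refl (N : ℕ) (T : BQF) : GRel N T T := ⟨1, g0_one N, act_one T⟩

theorem rel_symm {N : ℕ} {T T' : BQF} (h : GRel N T T') : GRel N T' T := by
  obtain ⟨U, hU, rfl⟩ := h
  exact ⟨U⁻¹, g0_inv hU, by rw [← act_mul, mul_inv_cancel, act_one]⟩

theorem rel_trans {N : ℕ} {T T' T'' : BQF} (h : GRel N T T') (h' : GRel N T' T'') :
    GRel N T T'' := by
  obtain ⟨U, hU, rfl⟩ := h
  obtain ⟨V, hV, rfl⟩ := h'
  exact ⟨U * V, g0_mul hU hV, act_mul T U V⟩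


theorem eval_act (T : BQF) (U : SL2Z) (x y : ℤ) :
    (T.act U).eval x y = T.eval (U.1 0 0 * x + U.1 0 1 * y) (U.1 1 0 * x + U.1 1 1 * y) := by
  simp only [BQF.eval, BQF.act]; ring

theorem posdef_act {T : BQF} (hT : T.PosDef) (U : SL2Z) : (T.act U).PosDef := by
  intro x y hxy
  rw [eval_act]
  refine hT _ _ ?_
  rintro ⟨h1, h2⟩
  have hd := det_eq U
  refine hxy ⟨?_, ?_⟩
  · linear_combination U.1 1 1 * h1 - U.1 0 1 * h2 - x * hd
  · linear_combination (-(U.1 1 0 : ℤ)) * h1 + U.1 0 0 * h2 - y * hd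

theorem disc_act (T : BQF) (U : SL2Z) : (T.act U).disc = T.disc := by
  have hd := det_eq U
  simp only [BQF.disc, BQF.act]
  linear_combination ((T.b ^ 2 - 4 * T.a * T.c) *
    (U.1 0 0 * U.1 1 1 - U.1 0 1 * U.1 1 0 + 1)) * hd

theorem qnd_act {N : ℕ} {D : ℤ} {T : BQF} (hT : T ∈ QND N D) {U : SL2Z}
    (hU : U ∈ Gamma0Set N) : T.act U ∈ QND N D := by
  obtain ⟨hpd, ⟨a', ha'⟩, hdisc⟩ := hT
  refine ⟨posdef_act hpd U, ?_, by rw [disc_act, hdisc]⟩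
  obtain ⟨g, hg⟩ := hU
  exact ⟨a' * U.1 0 0 ^ 2 + T.b * U.1 0 0 * g + T.c * g * U.1 1 0,
    by simp only [BQF.act]; rw [ha', hg]; ring⟩

theorem b_act_modeq {N : ℕ} {D : ℤ} {T : BQF} (hT : T ∈ QND N D) {U : SL2Z}
    (hU : U ∈ Gamma0Set N) : (T.act U).b ≡ T.b [ZMOD (2 * N)] := by
  obtain ⟨hpd, ⟨a', ha'⟩, hdisc⟩ := hT
  obtain ⟨g, hg⟩ := hU
  have hd := det_eq U
  rw [hg] at hd
  have h : (2 * (N : ℤ)) ∣ (T.act U).b - T.b :=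
    ⟨a' * U.1 0 0 * U.1 0 1 + T.b * U.1 0 1 * g + T.c * g * U.1 1 1, by
      simp only [BQF.act]; rw [ha', hg]; linear_combination T.b * hd⟩
  exact (Int.modEq_iff_dvd.mpr h).symm

theorem act_injective (U : SL2Z) {T T' : BQF} (h : T.act U = T'.act U) : T = T' := by
  have := congrArg (fun S => S.act U⁻¹) h
  simpa only [← act_mul, mul_inv_cancel, act_one] using this

theorem stab_iff (T : BQF) (U V : SL2Z) :
    (T.act U).act V = T.act U ↔ T.act (U * V * U⁻¹) = T := by
  constructor
  · intro h
    rw [← act_mul] at h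
    apply act_injective U
    rw [← act_mul, inv_mul_cancel_right, h]
  · intro h
    have := congrArg (fun S => S.act U) h
    simp only [← act_mul, inv_mul_cancel_right] at this
    rw [act_mul] at this
    exact this

theorem eps_act {N : ℕ} (T : BQF) {U : SL2Z} (hU : U ∈ Gamma0Set N) :
    eps N (T.act U) = eps N T := by
  refine Nat.card_congr ⟨fun V => ⟨U * V.1 * U⁻¹, g0_mul (g0_mul hU V.2.1) (g0_inv hU),
      (stab_iff T U V.1).mp V.2.2⟩,
    fun W => ⟨U⁻¹ * W.1 * U, g0_mul (g0_mul (g0_inv hU) W.2.1) hU,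
      (stab_iff T U _).mpr (by rw [show U * (U⁻¹ * W.1 * U) * U⁻¹ = W.1 by group]; exact W.2.2)⟩,
    ?_, ?_⟩
  · intro V; apply Subtype.ext; show U⁻¹ * (U * V.1 * U⁻¹) * U = V.1; group
  · intro W; apply Subtype.ext; show U * (U⁻¹ * W.1 * U) * U⁻¹ = W.1; group

/-- The reflection `[a,b,c] ↦ [a,-b,c]`. -/
def bflip (T : BQF) : BQF := ⟨T.a, -T.b, T.c⟩

theorem bflip_bflip (T : BQF) : bflip (bflip T) = T := by simp [bflip]

theorem bflip_inj : Function.Injective bflip :=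
  Function.Involutive.injective bflip_bflip

/-- Conjugation of `U` by `diag(1,-1)`. -/
def wconj (U : SL2Z) : SL2Z :=
  ⟨!![U.1 0 0, -U.1 0 1; -U.1 1 0, U.1 1 1], by
    have := det_eq U
    simp [Matrix.det_fin_two_of]
    linarith⟩

theorem wconj_wconj (U : SL2Z) : wconj (wconj U) = U := by
  apply Subtype.ext
  simp only [wconj]
  ext i j
  fin_cases i <;> fin_cases j <;> simp

theorem wconj_mem {N : ℕ} {U : SL2Z} (hU : U ∈ Gamma0Set N) : wconj U ∈ Gamma0Set N := by
  simp only [Gamma0Set, Set.mem_setOf_eq, wconj] at *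
  show (N:ℤ) ∣ -U.1 1 0
  simpa using hU.neg_right

theorem bflip_act (T : BQF) (U : SL2Z) : (bflip T).act (wconj U) = bflip (T.act U) := by
  have h00 : (wconj U).1 0 0 = U.1 0 0 := rfl
  have h01 : (wconj U).1 0 1 = -U.1 0 1 := rfl
  have h10 : (wconj U).1 1 0 = -U.1 1 0 := rfl
  have h11 : (wconj U).1 1 1 = U.1 1 1 := rfl
  simp only [bflip, BQF.act, h00, h01, h10, h11]
  rw [BQF.mk.injEq]
  refine ⟨by ring, by ring, by ring⟩

theorem bflip_stab_iff (T : BQF) (U : SL2Z) :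
    (bflip T).act (wconj U) = bflip T ↔ T.act U = T := by
  rw [bflip_act]
  exact ⟨fun h => bflip_inj h, fun h => by rw [h]⟩

theorem eps_bflip (N : ℕ) (T : BQF) : eps N (bflip T) = eps N T := by
  refine Nat.card_congr ⟨fun V => ⟨wconj V.1, wconj_mem V.2.1, ?_⟩,
    fun W => ⟨wconj W.1, wconj_mem W.2.1, (bflip_stab_iff T W.1).mpr W.2.2⟩, ?_, ?_⟩
  · have h := V.2.2
    rw [show V.1 = wconj (wconj V.1) from (wconj_wconj V.1).symm] at h
    exact (bflip_stab_iff T (wconj V.1)).mp h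
  · intro V; apply Subtype.ext; exact wconj_wconj V.1
  · intro W; apply Subtype.ext; exact wconj_wconj W.1

theorem bflip_mem {N : ℕ} {D : ℤ} {T : BQF} (hT : T ∈ QND N D) : bflip T ∈ QND N D := by
  obtain ⟨hpd, hdvd, hdisc⟩ := hT
  refine ⟨?_, hdvd, ?_⟩
  · intro x y hxy
    have h := hpd x (-y) (by rintro ⟨h1, h2⟩; exact hxy ⟨h1, neg_eq_zero.mp h2⟩)
    simp only [BQF.eval, bflip] at *
    linarith [h]
  · simp only [BQF.disc, bflip] at *
    linarith [hdisc]

theorem sum_reps_eq {N : ℕ} {S : Set BQF} {R₁ R₂ : Finset BQF}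
    (h₁ : IsOrbitReps N S R₁) (h₂ : IsOrbitReps N S R₂)
    (f : BQF → ℂ) (hf : ∀ T ∈ S, ∀ U ∈ Gamma0Set N, f (T.act U) = f T) :
    ∑ T ∈ R₁, f T = ∑ T ∈ R₂, f T := by
  refine Finset.sum_bij' (fun T hT => (h₂.2 T (h₁.1 T hT)).choose)
    (fun T hT => (h₁.2 T (h₂.1 T hT)).choose)
    (fun T hT => (h₂.2 T (h₁.1 T hT)).choose_spec.1.1)
    (fun T hT => (h₁.2 T (h₂.1 T hT)).choose_spec.1.1) ?_ ?_ ?_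
  · -- left inverse
    intro T hT
    set T' := (h₂.2 T (h₁.1 T hT)).choose with hT'
    have hrel : GRel N T T' := (h₂.2 T (h₁.1 T hT)).choose_spec.1.2
    have hT'S : T' ∈ S := h₂.1 T' (h₂.2 T (h₁.1 T hT)).choose_spec.1.1
    have hrel' : GRel N T' ((h₁.2 T' hT'S).choose) := (h₁.2 T' hT'S).choose_spec.1.2
    have hmem : (h₁.2 T' hT'S).choose ∈ R₁ := (h₁.2 T' hT'S).choose_spec.1.1
    -- uniqueness of repr of T in R₁: both T and choose are in R₁ and related to T'
    have hu := (h₁.2 T' hT'S).choose_spec.2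
    exact (hu T ⟨hT, rel_symm hrel⟩).symm
  · intro T hT
    set T' := (h₁.2 T (h₂.1 T hT)).choose with hT'
    have hrel : GRel N T T' := (h₁.2 T (h₂.1 T hT)).choose_spec.1.2
    have hT'S : T' ∈ S := h₁.1 T' (h₁.2 T (h₂.1 T hT)).choose_spec.1.1
    have hu := (h₂.2 T' hT'S).choose_spec.2
    exact (hu T ⟨hT, rel_symm hrel⟩).symm
  · intro T hT
    have hrel : GRel N T ((h₂.2 T (h₁.1 T hT)).choose) := (h₂.2 T (h₁.1 T hT)).choose_spec.1.2
    obtain ⟨U, hU, hact⟩ := hrel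
    show f T = f ((h₂.2 T (h₁.1 T hT)).choose)
    rw [← hact, hf T (h₁.1 T hT) U hU]

theorem qnd_b_sq {N : ℕ} {D : ℤ} {T : BQF} (hT : T ∈ QND N D) :
    T.b ^ 2 ≡ D [ZMOD (4 * N)] := by
  obtain ⟨-, ⟨a', ha'⟩, hdisc⟩ := hT
  refine Int.modEq_iff_dvd.mpr ⟨-(a' * T.c), ?_⟩
  simp only [BQF.disc] at hdisc
  rw [← hdisc, ha']; ring

theorem sq_modeq {N : ℕ} {x y : ℤ} (h : x ≡ y [ZMOD (2 * N)]) :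
    x ^ 2 ≡ y ^ 2 [ZMOD (4 * N)] := by
  obtain ⟨k, hk⟩ := Int.ModEq.dvd h  -- (2N) ∣ y - x
  refine Int.modEq_iff_dvd.mpr ⟨k * x + N * k ^ 2, ?_⟩
  have : y = x + 2 * N * k := by linarith
  rw [this]; ring

/-- the residue of `T.b` mod `2N` as a natural number. -/
def keyfun (N : ℕ) (T : BQF) : ℕ := (T.b % (2 * N)).toNat

theorem keyfun_spec {N : ℕ} (hN : 0 < N) (T : BQF) :
    ((keyfun N T : ℤ) = T.b % (2 * N)) ∧ keyfun N T < 2 * N := by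
  have h2N : (0:ℤ) < 2 * N := by positivity
  have h1 := Int.emod_nonneg T.b (ne_of_gt h2N)
  have h2 := Int.emod_lt_of_pos T.b h2N
  have heq : ((keyfun N T : ℤ) = T.b % (2 * N)) := by
    simp [keyfun, Int.toNat_of_nonneg h1]
  exact ⟨heq, by omega⟩

theorem keyfun_modeq {N : ℕ} (hN : 0 < N) (T : BQF) :
    T.b ≡ (keyfun N T : ℤ) [ZMOD (2 * N)] := by
  rw [(keyfun_spec hN T).1]
  exact (Int.emod_emod_of_dvd T.b dvd_rfl).symm

theorem keyfun_eq_iff {N : ℕ} (hN : 0 < N) {ρ : ℕ} (hρ : ρ < 2 * N) (T : BQF) :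
    keyfun N T = ρ ↔ T.b ≡ (ρ : ℤ) [ZMOD (2 * N)] := by
  obtain ⟨h1, h2⟩ := keyfun_spec hN T
  constructor
  · rintro rfl
    exact keyfun_modeq hN T
  · intro h
    have hthis : T.b % (2 * N) = (ρ : ℤ) % (2 * N) := h
    have hρz : (ρ : ℤ) % (2 * N) = ρ :=
      Int.emod_eq_of_lt (Int.natCast_nonneg ρ) (by exact_mod_cast hρ)
    omega

theorem rho_cases {N : ℕ} (hN : N.Prime) {ρ ρ₀ : ℕ} (hρ : ρ < 2 * N) (hρ₀ : ρ₀ < 2 * N)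
    (h : (ρ : ℤ) ^ 2 ≡ (ρ₀ : ℤ) ^ 2 [ZMOD (4 * N)]) :
    ρ = ρ₀ ∨ (ρ : ℤ) ≡ -(ρ₀ : ℤ) [ZMOD (2 * N)] := by
  have hNp : Prime ((N : ℤ)) := Nat.prime_iff_prime_int.mp hN
  obtain ⟨k, hk⟩ := Int.ModEq.dvd h  -- 4N ∣ ρ₀² - ρ²
  rcases Int.even_or_odd ((ρ₀ : ℤ) - ρ) with he | ho
  · obtain ⟨u, hu⟩ := he
    have hprod : (N : ℤ) * k = u * (u + ρ) := by nlinarith [hk, hu]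
    have hdvd : (N : ℤ) ∣ u * (u + ρ) := ⟨k, hprod.symm⟩
    rcases hNp.dvd_mul.mp hdvd with h1 | h2
    · left
      obtain ⟨w, hw⟩ := h1
      have : (2 * (N : ℤ)) ∣ ((ρ₀ : ℤ) - ρ) := ⟨w, by rw [hu, hw]; ring⟩
      have h0 : ((ρ₀ : ℤ) - ρ) = 0 := Int.eq_zero_of_abs_lt_dvd this (by
        rw [abs_lt]; constructor <;> [skip; skip] <;> push_cast <;> omega)
      omega
    · right
      obtain ⟨w, hw⟩ := h2
      refine Int.modEq_iff_dvd.mpr ⟨-w, ?_⟩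
      have : (ρ₀ : ℤ) + ρ = 2 * (u + ρ) := by linarith [hu]
      rw [show -(ρ₀ : ℤ) - ρ = -((ρ₀ : ℤ) + ρ) by ring, this, hw]; ring
  · exfalso
    have ho' : Odd ((ρ₀ : ℤ) + ρ) := by
      obtain ⟨u, hu⟩ := ho
      exact ⟨u + ρ, by linarith⟩
    have hodd : Odd (((ρ₀ : ℤ) - ρ) * ((ρ₀ : ℤ) + ρ)) := ho.mul ho'
    have : ((ρ₀ : ℤ) - ρ) * ((ρ₀ : ℤ) + ρ) = 2 * (2 * N * k) := by
      rw [show ((ρ₀:ℤ) - ρ) * ((ρ₀:ℤ) + ρ) = (ρ₀:ℤ)^2 - (ρ:ℤ)^2 by ring, hk]; ring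
    rw [this] at hodd
    exact (Int.not_odd_iff_even.mpr (even_two_mul _)) hodd

theorem qndrho_congr {N : ℕ} {D : ℤ} {ρ ρ' : ℤ} (h : ρ ≡ ρ' [ZMOD (2 * N)]) :
    QNDrho N D ρ = QNDrho N D ρ' := by
  ext T
  exact ⟨fun ⟨h1, h2⟩ => ⟨h1, h2.trans h⟩, fun ⟨h1, h2⟩ => ⟨h1, h2.trans h.symm⟩⟩

theorem rel_bflip {N : ℕ} {T T' : BQF} (h : GRel N T T') : GRel N (bflip T) (bflip T') := by
  obtain ⟨U, hU, rfl⟩ := h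
  exact ⟨wconj U, wconj_mem hU, bflip_act T U⟩

theorem bflip_mem_rho {N : ℕ} {D ρ : ℤ} {T : BQF} (hT : T ∈ QNDrho N D ρ) :
    bflip T ∈ QNDrho N D (-ρ) := by
  obtain ⟨h1, h2⟩ := hT
  exact ⟨bflip_mem h1, by simpa [bflip] using h2.neg⟩

theorem filter_reps {N : ℕ} (hN : 0 < N) {D : ℤ} {R : Finset BQF}
    (hR : IsOrbitReps N (QND N D) R) {ρ : ℕ} (hρ : ρ < 2 * N) :
    IsOrbitReps N (QNDrho N D (ρ : ℤ)) (R.filter (fun T => keyfun N T = ρ)) := by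
  constructor
  · intro T hT
    rw [Finset.mem_filter] at hT
    exact ⟨hR.1 T hT.1, (keyfun_eq_iff hN hρ T).mp hT.2⟩
  · intro T hT
    obtain ⟨hTQ, hTb⟩ := hT
    obtain ⟨T', ⟨hT'R, hrel⟩, huniq⟩ := hR.2 T hTQ
    refine ⟨T', ⟨Finset.mem_filter.mpr ⟨hT'R, ?_⟩, hrel⟩, ?_⟩
    · obtain ⟨U, hU, hact⟩ := hrel
      have hmod : T'.b ≡ T.b [ZMOD (2*N)] := hact ▸ b_act_modeq hTQ hU
      exact (keyfun_eq_iff hN hρ T').mpr (hmod.trans hTb)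
    · rintro y ⟨hy, hyrel⟩
      exact huniq y ⟨(Finset.mem_filter.mp hy).1, hyrel⟩

theorem image_reps {N : ℕ} {D ρ₁ ρ₂ : ℤ} {A : Finset BQF}
    (hA : IsOrbitReps N (QNDrho N D ρ₂) A) (hcong : ρ₁ ≡ -ρ₂ [ZMOD (2 * N)]) :
    IsOrbitReps N (QNDrho N D ρ₁) (A.image bflip) := by
  have hQ : QNDrho N D ρ₁ = QNDrho N D (-ρ₂) := qndrho_congr hcong
  constructor
  · intro T hT
    rw [Finset.mem_image] at hT
    obtain ⟨z, hz, rfl⟩ := hT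
    rw [hQ]
    exact bflip_mem_rho (hA.1 z hz)
  · intro T hT
    have hbT : bflip T ∈ QNDrho N D ρ₂ := by
      have h1 : bflip T ∈ QNDrho N D (-ρ₁) := bflip_mem_rho hT
      rwa [qndrho_congr (show (-ρ₁ : ℤ) ≡ ρ₂ [ZMOD (2*N)] from by
        have := hcong.neg; simpa using this)] at h1
    obtain ⟨T', ⟨hT'A, hrel⟩, huniq⟩ := hA.2 (bflip T) hbT
    refine ⟨bflip T', ⟨Finset.mem_image_of_mem _ hT'A, ?_⟩, ?_⟩
    · have h2 := rel_bflip (hrel : GRel N (bflip T) T')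
      rwa [bflip_bflip] at h2
    · rintro y ⟨hy, hyrel⟩
      rw [Finset.mem_image] at hy
      obtain ⟨z, hz, rfl⟩ := hy
      have h3 : GRel N (bflip T) (bflip (bflip z)) := rel_bflip hyrel
      rw [bflip_bflip] at h3
      rw [huniq z ⟨hz, h3⟩]

theorem habs (z : ℂ) : ‖(1/2 : ℂ) * z‖ = (1/2 : ℝ) * ‖z‖ := by
  rw [norm_mul]
  congr 1
  rw [norm_div, Complex.norm_two, norm_one]


/-- Let `N` be prime, `D < 0`, and let `a : Q_{N,D} → ℂ` be `Γ₀(N)`-invariant with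
`a([Na, −b, c]) = a([Na, b, c])` (even weight).  Then `B(D) = |A(D)|`, where
`B(D) := (1/2) Σ_{ρ ∈ R_D} |B(D, ρ)|`,
`B(D, ρ) := Σ_{T ∈ Q_{N,D,ρ}/Γ₀(N)} a(T)/ε(T)`,
`A(D) := (1/2) Σ_{T ∈ Q_{N,D}/Γ₀(N)} a(T)/ε(T)`, and
`R_D = {ρ ∈ ℤ/2Nℤ : ρ² ≡ D (mod 4N)}` (represented by the residues `0 ≤ ρ < 2N`);
the sums run over any sets of orbit representatives. -/
theorem stmt13 (N : ℕ) (hN : N.Prime) (D : ℤ) (hD : D < 0)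
    (a : BQF → ℂ)
    (hinv : ∀ T ∈ QND N D, ∀ U ∈ Gamma0Set N, a (T.act U) = a T)
    (heven : ∀ T : BQF, T ∈ QND N D → a ⟨T.a, -T.b, T.c⟩ = a T)
    (R : Finset BQF) (hR : IsOrbitReps N (QND N D) R)
    (Rρ : ℕ → Finset BQF)
    (hRρ : ∀ ρ ∈ (Finset.range (2 * N)).filter
        (fun ρ : ℕ => ((ρ : ℤ) ^ 2 ≡ D [ZMOD (4 * N)])),
      IsOrbitReps N (QNDrho N D (ρ : ℤ)) (Rρ ρ)) :
    (1 / 2 : ℝ) * ∑ ρ ∈ (Finset.range (2 * N)).filter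
        (fun ρ : ℕ => ((ρ : ℤ) ^ 2 ≡ D [ZMOD (4 * N)])),
      ‖∑ T ∈ Rρ ρ, a T / (eps N T : ℂ)‖ =
    ‖(1 / 2 : ℂ) * ∑ T ∈ R, a T / (eps N T : ℂ)‖ := by
  classical
  have hN0 : 0 < N := hN.pos
  set F := (Finset.range (2 * N)).filter
      (fun ρ : ℕ => ((ρ : ℤ) ^ 2 ≡ D [ZMOD (4 * N)])) with hF
  set f : BQF → ℂ := fun T => a T / (eps N T : ℂ) with hfdef
  have hf : ∀ T ∈ QND N D, ∀ U ∈ Gamma0Set N, f (T.act U) = f T := by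
    intro T hT U hU
    simp only [hfdef, hinv T hT U hU, eps_act T hU]
  have hfb : ∀ T ∈ QND N D, f (bflip T) = f T := by
    intro T hT
    simp only [hfdef, eps_bflip]
    congr 1
    exact heven T hT
  have hFmem : ∀ ρ ∈ F, ρ < 2 * N ∧ ((ρ:ℤ)^2 ≡ D [ZMOD (4*N)]) := by
    intro ρ hρ
    rw [hF, Finset.mem_filter, Finset.mem_range] at hρ
    exact hρ
  have hB : ∀ ρ ∈ F, ∑ T ∈ Rρ ρ, f T = ∑ T ∈ R.filter (fun T => keyfun N T = ρ), f T := by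
    intro ρ hρ
    exact sum_reps_eq (hRρ ρ hρ) (filter_reps hN0 hR (hFmem ρ hρ).1) f
      (fun T hT U hU => hf T hT.1 U hU)
  have hmaps : ∀ T ∈ R, keyfun N T ∈ F := by
    intro T hT
    have hTQ := hR.1 T hT
    rw [hF, Finset.mem_filter, Finset.mem_range]
    exact ⟨(keyfun_spec hN0 T).2, (sq_modeq (keyfun_modeq hN0 T).symm).trans (qnd_b_sq hTQ)⟩
  have hsplit' : ∑ T ∈ R, f T = ∑ ρ ∈ F, ∑ T ∈ Rρ ρ, f T := by
    rw [← Finset.sum_fiberwise_of_maps_to hmaps f]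
    exact Finset.sum_congr rfl (fun ρ hρ => (hB ρ hρ).symm)
  have hpair : ∀ ρ₁ ∈ F, ∀ ρ₂ ∈ F, ((ρ₁:ℤ) ≡ -(ρ₂:ℤ) [ZMOD (2*N)]) →
      ∑ T ∈ Rρ ρ₁, f T = ∑ T ∈ Rρ ρ₂, f T := by
    intro ρ₁ h₁ ρ₂ h₂ hcong
    have h1 : ∑ T ∈ Rρ ρ₁, f T = ∑ T ∈ (Rρ ρ₂).image bflip, f T :=
      sum_reps_eq (hRρ ρ₁ h₁) (image_reps (hRρ ρ₂ h₂) hcong) f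
        (fun T hT U hU => hf T hT.1 U hU)
    rw [h1, Finset.sum_image (fun x _ y _ h => bflip_inj h)]
    exact Finset.sum_congr rfl (fun T hT => hfb T ((hRρ ρ₂ h₂).1 T hT).1)
  rcases Finset.eq_empty_or_nonempty F with hFe | hne
  · have hRe : R = ∅ := by
      rw [Finset.eq_empty_iff_forall_notMem]
      intro T hT
      have h := hmaps T hT
      rw [hFe] at h
      exact absurd h (Finset.notMem_empty _)
    rw [hFe, hRe]
    simp
  · obtain ⟨ρ₀, hρ₀⟩ := hne
    have hρ₀lt := (hFmem ρ₀ hρ₀).1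
    set ρ₁ : ℕ := if ρ₀ = 0 then 0 else 2 * N - ρ₀ with hρ₁def
    have hFsub : ∀ ρ ∈ F, ρ = ρ₀ ∨ ρ = ρ₁ := by
      intro ρ hρ
      obtain ⟨hlt, hsq⟩ := hFmem ρ hρ
      have hsq' : (ρ:ℤ)^2 ≡ (ρ₀:ℤ)^2 [ZMOD (4*N)] := hsq.trans (hFmem ρ₀ hρ₀).2.symm
      rcases rho_cases hN hlt hρ₀lt hsq' with h | h
      · exact Or.inl h
      · right
        obtain ⟨w, hw⟩ := Int.ModEq.dvd h
        have h2N : (0:ℤ) < 2*N := by positivity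
        have hltz : (ρ:ℤ) < 2*N := by exact_mod_cast hlt
        have hρ₀ltz : (ρ₀:ℤ) < 2*N := by exact_mod_cast hρ₀lt
        have hnn : (0:ℤ) ≤ ρ := Int.natCast_nonneg ρ
        have hnn₀ : (0:ℤ) ≤ ρ₀ := Int.natCast_nonneg ρ₀
        have e1 : 2*(N:ℤ)*w ≤ 2*(N:ℤ)*0 := by rw [mul_zero, ← hw]; linarith
        have hw0 : w ≤ 0 := le_of_mul_le_mul_left e1 h2N
        have e2 : 2*(N:ℤ)*(-2) < 2*(N:ℤ)*w := by rw [← hw]; linarith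
        have hw1 : -2 < w := lt_of_mul_lt_mul_left e2 (le_of_lt h2N)
        have hsum : (ρ:ℤ) + ρ₀ = 0 ∨ (ρ:ℤ) + ρ₀ = 2*N := by
          interval_cases w
          · right; linarith
          · left; linarith
        rw [hρ₁def]
        split_ifs with h0
        · subst h0; rcases hsum with h' | h' <;> omega
        · rcases hsum with h' | h' <;> omega
    have hcast₁ : ∀ (h : ρ₀ ≠ 0), ((ρ₁:ℤ)) = 2*N - ρ₀ := by
      intro h
      rw [hρ₁def]
      simp only [h, if_false]
      push_cast [Nat.le_of_lt hρ₀lt]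
      ring
    by_cases hEq : ρ₁ = ρ₀
    · have hFeq : F = {ρ₀} := by
        apply Finset.eq_singleton_iff_unique_mem.mpr
        refine ⟨hρ₀, fun ρ hρ => ?_⟩
        rcases hFsub ρ hρ with h | h
        · exact h
        · rw [h, hEq]
      rw [hFeq, Finset.sum_singleton, hsplit', hFeq, Finset.sum_singleton, habs]
    · have hρ₀ne : ρ₀ ≠ 0 := by
        intro h
        exact hEq (by rw [hρ₁def, if_pos h, h])
      have hρ₁lt : ρ₁ < 2*N := by rw [hρ₁def, if_neg hρ₀ne]; omega
      have hρ₁F : ρ₁ ∈ F := by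
        rw [hF, Finset.mem_filter, Finset.mem_range]
        refine ⟨hρ₁lt, ?_⟩
        have hsq : (ρ₁:ℤ)^2 ≡ (ρ₀:ℤ)^2 [ZMOD (4*N)] := by
          refine Int.modEq_iff_dvd.mpr ⟨(ρ₀:ℤ) - N, ?_⟩
          rw [hcast₁ hρ₀ne]; ring
        exact hsq.trans (hFmem ρ₀ hρ₀).2
      have hFeq : F = {ρ₀, ρ₁} := by
        apply Finset.Subset.antisymm
        · intro ρ hρ
          rcases hFsub ρ hρ with h | h <;> simp [h]
        · intro ρ hρ
          rcases Finset.mem_insert.mp hρ with h | h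
          · rwa [h]
          · rw [Finset.mem_singleton.mp h]; exact hρ₁F
      have hcong : (ρ₁:ℤ) ≡ -(ρ₀:ℤ) [ZMOD (2*N)] := by
        refine Int.modEq_iff_dvd.mpr ⟨-1, ?_⟩
        rw [hcast₁ hρ₀ne]; ring
      have hBeq : ∑ T ∈ Rρ ρ₁, f T = ∑ T ∈ Rρ ρ₀, f T := hpair ρ₁ hρ₁F ρ₀ hρ₀ hcong
      have hne' : ρ₀ ≠ ρ₁ := Ne.symm hEq
      rw [hsplit', hFeq, Finset.sum_pair hne', Finset.sum_pair hne', hBeq, habs]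
      have h2 : ‖(∑ T ∈ Rρ ρ₀, f T) + (∑ T ∈ Rρ ρ₀, f T)‖
          = 2 * ‖∑ T ∈ Rρ ρ₀, f T‖ := by
        rw [← two_mul, norm_mul, Complex.norm_two]
      rw [h2]
      ring
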